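/- Let X be a finite nonempty type, M a finite index set, and φ_m : X → ℝ feature functions for m ∈ M. For θ ∈ ℝ^M define the Gibbs distribution π_θ(x) = exp(−Σ_m θ_m φ_m(x)) / Z_θ, where Z_θ = Σ_x exp(−Σ_m θ_m φ_m(x)), and define η_m(θ) = Σ_x π_θ(x) φ_m(x). Then for every μ ∈ ℝ^M and every choice of Λ_m > 0 (m ∈ M), there exists θ ∈ ℝ^M such that θ_m = Λ_m(η_m(θ) − μ_m) for every m ∈ M. -/

import Mathlib

open Finset in
/-- **Corollary (finite discrete case).** For a finite state space `X`, features `φ m`, the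
Gibbs distribution `π θ x = exp(−Σ_m θ m * φ m x) / Z θ` with
`Z θ = Σ_x exp(−Σ_m θ m * φ m x)` and feature means `η m θ = Σ_x π θ x * φ m x`, the
fixed-point equation `θ m = Λ m * (η m θ − μ m)` has a solution for every `μ` and all
positive `Λ m`. -/
theorem exists_fixed_point_gibbs_finite
    (X : Type*) [Fintype X] [Nonempty X]
    (M : Type*) [Fintype M]
    (φ : M → X → ℝ) (Λ : M → ℝ) (hΛ : ∀ m, 0 < Λ m) (μ : M → ℝ) :
    ∃ θ : M → ℝ, ∀ m, θ m =
      Λ m * ((∑ x : X, (Real.exp (-∑ m' : M, θ m' * φ m' x) /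
                          ∑ y : X, Real.exp (-∑ m' : M, θ m' * φ m' y)) * φ m x) - μ m) := by
  rcases isEmpty_or_nonempty M with hM | hM
  · exact ⟨fun _ => 0, fun m => (hM.false m).elim⟩
  classical
  -- Setup
  set E : (M → ℝ) → X → ℝ := fun θ x => ∑ m' : M, θ m' * φ m' x with hE
  set Z : (M → ℝ) → ℝ := fun θ => ∑ x : X, Real.exp (-(E θ x)) with hZ
  have hZpos : ∀ θ, 0 < Z θ :=
    fun θ => Finset.sum_pos (fun x _ => Real.exp_pos _) univ_nonempty
  set G : (M → ℝ) → ℝ :=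
    fun θ => (∑ m : M, (θ m * θ m / (2 * Λ m) + μ m * θ m)) + Real.log (Z θ) with hG
  -- Continuity
  have hEc : ∀ x, Continuous fun θ : M → ℝ => E θ x :=
    fun x => continuous_finset_sum _ fun m' _ => (continuous_apply m').mul continuous_const
  have hZc : Continuous Z :=
    continuous_finset_sum _ fun x _ => Real.continuous_exp.comp (hEc x).neg
  have hGc : Continuous G := by
    refine Continuous.add ?_ ?_
    · exact continuous_finset_sum _ fun m _ =>
        (((continuous_apply m).mul (continuous_apply m)).div_const _).add
          (continuous_const.mul (continuous_apply m))
    · exact continuous_iff_continuousAt.2 fun θ =>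
        (Real.continuousAt_log (hZpos θ).ne').comp hZc.continuousAt
  -- Coercivity
  set Λmax : ℝ := univ.sup' univ_nonempty Λ with hΛmaxdef
  have hΛmax : 0 < Λmax :=
    lt_of_lt_of_le (hΛ (Classical.arbitrary M)) (Finset.le_sup' Λ (mem_univ _))
  set x0 : X := Classical.arbitrary X with hx0
  set A : ℝ := ∑ m : M, |μ m| with hA
  set B : ℝ := ∑ m : M, |φ m x0| with hB
  have hbound : ∀ θ : M → ℝ, ‖θ‖^2/(2*Λmax) - (A+B)*‖θ‖ ≤ G θ := by
    intro θ
    have hnA : ∀ m, |θ m| ≤ ‖θ‖ := fun m => by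
      simpa [Real.norm_eq_abs] using norm_le_pi_norm θ m
    obtain ⟨m₀, -, hm₀⟩ :=
      Finset.exists_mem_eq_sup (univ : Finset M) univ_nonempty (fun b => ‖θ b‖₊)
    have hnorm : ‖θ‖ = |θ m₀| := by rw [Pi.norm_def, hm₀]; simp [Real.norm_eq_abs]
    have h1 : ‖θ‖^2/(2*Λmax) ≤ ∑ m : M, θ m * θ m / (2 * Λ m) := by
      have hle : Λ m₀ ≤ Λmax := Finset.le_sup' Λ (mem_univ m₀)
      have hone : ‖θ‖^2/(2*Λmax) ≤ θ m₀ * θ m₀ / (2 * Λ m₀) := by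
        rw [hnorm, ← pow_two, sq_abs, pow_two]
        have h0 : (0:ℝ) ≤ θ m₀ * θ m₀ := mul_self_nonneg _
        have hp : (0:ℝ) < 2 * Λ m₀ := by linarith [hΛ m₀]
        exact div_le_div_of_nonneg_left h0 hp (by linarith)
      refine hone.trans
        (Finset.single_le_sum (f := fun m => θ m * θ m / (2 * Λ m)) (fun m _ => ?_)
          (mem_univ m₀))
      have h0 : (0:ℝ) ≤ θ m * θ m := mul_self_nonneg _
      have hp : (0:ℝ) < 2 * Λ m := by linarith [hΛ m]
      positivity
    have h2 : -(A*‖θ‖) ≤ ∑ m : M, μ m * θ m := by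
      have habs : |∑ m : M, μ m * θ m| ≤ A * ‖θ‖ := by
        calc |∑ m : M, μ m * θ m| ≤ ∑ m : M, |μ m * θ m| := Finset.abs_sum_le_sum_abs _ _
          _ = ∑ m : M, |μ m| * |θ m| := by simp [abs_mul]
          _ ≤ ∑ m : M, |μ m| * ‖θ‖ :=
              Finset.sum_le_sum fun m _ =>
                mul_le_mul_of_nonneg_left (hnA m) (abs_nonneg _)
          _ = A * ‖θ‖ := by rw [hA, Finset.sum_mul]
      linarith [neg_abs_le (∑ m : M, μ m * θ m)]
    have h3 : -(B*‖θ‖) ≤ Real.log (Z θ) := by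
      have hle : Real.exp (-(E θ x0)) ≤ Z θ :=
        Finset.single_le_sum (f := fun x => Real.exp (-(E θ x)))
          (fun x _ => (Real.exp_pos _).le) (mem_univ x0)
      have hlog : -(E θ x0) ≤ Real.log (Z θ) := (Real.le_log_iff_exp_le (hZpos θ)).2 hle
      have habs : |E θ x0| ≤ B * ‖θ‖ := by
        calc |E θ x0| ≤ ∑ m : M, |θ m * φ m x0| := Finset.abs_sum_le_sum_abs _ _
          _ = ∑ m : M, |φ m x0| * |θ m| := by
              refine Finset.sum_congr rfl fun m _ => ?_
              rw [abs_mul, mul_comm]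
          _ ≤ ∑ m : M, |φ m x0| * ‖θ‖ :=
              Finset.sum_le_sum fun m _ =>
                mul_le_mul_of_nonneg_left (hnA m) (abs_nonneg _)
          _ = B * ‖θ‖ := by rw [hB, Finset.sum_mul]
      linarith [le_abs_self (E θ x0)]
    have hsum : (∑ m : M, (θ m * θ m / (2 * Λ m) + μ m * θ m))
        = (∑ m : M, θ m * θ m / (2 * Λ m)) + ∑ m : M, μ m * θ m :=
      Finset.sum_add_distrib
    show ‖θ‖^2/(2*Λmax) - (A+B)*‖θ‖
        ≤ (∑ m : M, (θ m * θ m / (2 * Λ m) + μ m * θ m)) + Real.log (Z θ)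
    rw [hsum]
    linarith
  have hcoer : Filter.Tendsto G (Filter.cocompact (M → ℝ)) Filter.atTop := by
    have h1 : Filter.Tendsto (fun r : ℝ => r/(2*Λmax) + (-(A+B))) Filter.atTop Filter.atTop :=
      Filter.tendsto_atTop_add_const_right _ _
        (Filter.tendsto_id.atTop_div_const (by positivity))
    have hpoly : Filter.Tendsto (fun r : ℝ => r^2/(2*Λmax) - (A+B)*r)
        Filter.atTop Filter.atTop :=
      (Filter.tendsto_id.atTop_mul_atTop₀ h1).congr (fun r => by simp only [id_eq]; ring)
    exact Filter.tendsto_atTop_mono hbound (hpoly.comp tendsto_norm_cocompact_atTop)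
  obtain ⟨θ0, hθ0⟩ := hGc.exists_forall_le hcoer
  refine ⟨θ0, fun m => ?_⟩
  -- 1D restriction along coordinate m
  set a : X → ℝ := φ m with ha
  set b : X → ℝ := fun x => ∑ m' ∈ univ.erase m, θ0 m' * φ m' x with hb
  have hbE : ∀ x, E θ0 x = θ0 m * a x + b x := fun x =>
    (Finset.add_sum_erase _ _ (mem_univ m)).symm
  set S : ℝ → ℝ := fun t => ∑ x : X, Real.exp (-(b x + t * a x)) with hS
  have hSpos : ∀ t, 0 < S t :=
    fun t => Finset.sum_pos (fun x _ => Real.exp_pos _) univ_nonempty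
  set f : ℝ → ℝ := fun t => t * t / (2 * Λ m) + μ m * t + Real.log (S t) with hf
  have hupdE : ∀ (t : ℝ) (x : X), E (Function.update θ0 m t) x = b x + t * a x := by
    intro t x
    show (∑ m' : M, Function.update θ0 m t m' * φ m' x) = b x + t * a x
    have hfun : (fun m' => Function.update θ0 m t m' * φ m' x)
        = Function.update (fun m' => θ0 m' * φ m' x) m (t * φ m x) := by
      funext m'
      rcases eq_or_ne m' m with rfl | h
      · simp
      · simp [Function.update_of_ne h]
    rw [hfun, Finset.sum_update_of_mem (mem_univ m), ← Finset.erase_eq]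
    simp only [hb, ha]
    ring
  have hGf : ∀ t, G (Function.update θ0 m t)
      = f t + ∑ m' ∈ univ.erase m, (θ0 m' * θ0 m' / (2 * Λ m') + μ m' * θ0 m') := by
    intro t
    have hZS : Z (Function.update θ0 m t) = S t :=
      Finset.sum_congr rfl fun x _ => by rw [hupdE]
    show (∑ m' : M, (Function.update θ0 m t m' * Function.update θ0 m t m' / (2 * Λ m')
          + μ m' * Function.update θ0 m t m')) + Real.log (Z (Function.update θ0 m t)) = _
    rw [hZS]
    have hfun : (fun m' => Function.update θ0 m t m' * Function.update θ0 m t m' / (2 * Λ m')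
          + μ m' * Function.update θ0 m t m')
        = Function.update (fun m' => θ0 m' * θ0 m' / (2 * Λ m') + μ m' * θ0 m') m
            (t * t / (2 * Λ m) + μ m * t) := by
      funext m'
      rcases eq_or_ne m' m with rfl | h
      · simp
      · simp [Function.update_of_ne h]
    rw [hfun, Finset.sum_update_of_mem (mem_univ m), ← Finset.erase_eq]
    simp only [hf]
    ring
  have hmin : IsLocalMin f (θ0 m) := by
    refine Filter.Eventually.of_forall fun t => ?_
    have h1 := hθ0 (Function.update θ0 m t)
    have h2 := hGf t
    have h3 := hGf (θ0 m)
    rw [Function.update_eq_self] at h3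
    rw [h2, h3] at h1
    exact le_of_add_le_add_right h1
  -- derivative of f at θ0 m
  have hS' : HasDerivAt S
      (∑ x : X, Real.exp (-(b x + θ0 m * a x)) * (-(a x))) (θ0 m) := by
    refine HasDerivAt.fun_sum fun x _ => ?_
    exact (((hasDerivAt_mul_const (a x)).const_add (b x)).neg).exp
  have hf' : HasDerivAt f
      ((1 * θ0 m + θ0 m * 1) / (2 * Λ m) + μ m * 1
        + (∑ x : X, Real.exp (-(b x + θ0 m * a x)) * (-(a x))) / S (θ0 m)) (θ0 m) := by
    refine HasDerivAt.add (HasDerivAt.add ?_ ?_) ?_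
    · exact ((hasDerivAt_id (θ0 m)).mul (hasDerivAt_id (θ0 m))).div_const _
    · exact (hasDerivAt_id (θ0 m)).const_mul (μ m)
    · exact hS'.log (hSpos _).ne'
  have hzero := hmin.hasDerivAt_eq_zero hf'
  -- Algebra to conclude
  have hSZ : S (θ0 m) = Z θ0 :=
    Finset.sum_congr rfl fun x _ => by rw [hbE x]; ring_nf
  have hT : (∑ x : X, Real.exp (-(b x + θ0 m * a x)) * (-(a x)))
      = -∑ x : X, Real.exp (-(E θ0 x)) * φ m x := by
    rw [← Finset.sum_neg_distrib]
    refine Finset.sum_congr rfl fun x _ => ?_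
    rw [hbE x, ha]
    ring_nf
  have e1 : (1 * θ0 m + θ0 m * 1) / (2 * Λ m) = θ0 m / Λ m := by
    rw [one_mul, mul_one, ← two_mul, mul_div_mul_left _ _ (two_ne_zero)]
  rw [hT, hSZ, e1, mul_one, neg_div] at hzero
  have hgoal : (∑ x : X, (Real.exp (-∑ m' : M, θ0 m' * φ m' x) /
        ∑ y : X, Real.exp (-∑ m' : M, θ0 m' * φ m' y)) * φ m x)
      = (∑ x : X, Real.exp (-(E θ0 x)) * φ m x) / Z θ0 := by
    rw [Finset.sum_div]
    refine Finset.sum_congr rfl fun x _ => ?_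
    rw [div_mul_eq_mul_div]
  rw [hgoal]
  have h4 : (∑ x : X, Real.exp (-(E θ0 x)) * φ m x) / Z θ0 - μ m = θ0 m / Λ m := by
    linarith
  rw [h4, ← mul_div_assoc]
  exact (mul_div_cancel_left₀ (θ0 m) (hΛ m).ne').symm
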